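/- The 3-VFCA rule f(x,y,z) = (x₁y₁ + x₂y₁ + y₃z₁, x₁y₂ + x₂y₂ + y₃z₂, x₃y₁ + x₃y₂ + y₃z₃) is complete number-conserving on periodic configurations in the simplex Δ of any period L. -/

import Mathlib

lemma shift_sum (L : ℕ) (hL : 0 < L) (G : ℤ → ℝ) (hG : ∀ i, G (i + L) = G i) :
    ∑ i ∈ Finset.range L, G ((i : ℤ) - 1) = ∑ i ∈ Finset.range L, G i := by
  obtain ⟨n, rfl⟩ := Nat.exists_eq_succ_of_ne_zero hL.ne'
  rw [Finset.sum_range_succ' (fun i => G ((i : ℤ) - 1)) n, Finset.sum_range_succ]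
  have h1 : ∀ i : ℕ, G (((i + 1 : ℕ) : ℤ) - 1) = G i := by
    intro i; push_cast; ring_nf
  have h2 : G (((0 : ℕ) : ℤ) - 1) = G n := by
    have := hG (-1)
    push_cast at this ⊢
    rw [← this]; ring_nf
  rw [h2, Finset.sum_congr rfl fun i _ => h1 i]

theorem stmt_11 (L : ℕ) (hL : 0 < L)
    (f : (Fin 3 → ℝ) → (Fin 3 → ℝ) → (Fin 3 → ℝ) → (Fin 3 → ℝ))
    (hf : ∀ x y z, f x y z =
      ![x 0 * y 0 + x 1 * y 0 + y 2 * z 0,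
        x 0 * y 1 + x 1 * y 1 + y 2 * z 1,
        x 2 * y 0 + x 2 * y 1 + y 2 * z 2])
    (x : ℤ → Fin 3 → ℝ) (hper : ∀ i, x (i + L) = x i)
    (hΔ : ∀ i, (∑ m, x i m) = 1 ∧ ∀ m, 0 ≤ x i m) :
    ∀ k, ∑ i ∈ Finset.range L, f (x ((i : ℤ) - 1)) (x (i : ℤ)) (x ((i : ℤ) + 1)) k
      = ∑ i ∈ Finset.range L, x (i : ℤ) k := by
  have hsum : ∀ i : ℤ, x i 0 + x i 1 + x i 2 = 1 := by
    intro i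
    have h := (hΔ i).1
    rwa [Fin.sum_univ_three] at h
  intro k
  fin_cases k
  · -- k = 0
    show ∑ i ∈ Finset.range L, f (x ((i : ℤ) - 1)) (x (i : ℤ)) (x ((i : ℤ) + 1)) 0
      = ∑ i ∈ Finset.range L, x (i : ℤ) 0
    have key : ∀ i ∈ Finset.range L,
        f (x ((i : ℤ) - 1)) (x (i : ℤ)) (x ((i : ℤ) + 1)) 0
          = x (i : ℤ) 0 + ((fun j : ℤ => x j 2 * x (j + 1) 0) (i : ℤ)
            - (fun j : ℤ => x j 2 * x (j + 1) 0) ((i : ℤ) - 1)) := by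
      intro i _
      rw [hf]
      have h := hsum ((i : ℤ) - 1)
      simp only [Matrix.cons_val_zero]
      have : (i : ℤ) - 1 + 1 = i := by ring
      rw [this]
      linear_combination (x (i : ℤ) 0) * h
    rw [Finset.sum_congr rfl key, Finset.sum_add_distrib, Finset.sum_sub_distrib]
    have htel := shift_sum L hL (fun j : ℤ => x j 2 * x (j + 1) 0)
      (by intro j; simp [hper, add_right_comm j (L : ℤ) 1])
    linarith [htel]
  · -- k = 1
    show ∑ i ∈ Finset.range L, f (x ((i : ℤ) - 1)) (x (i : ℤ)) (x ((i : ℤ) + 1)) 1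
      = ∑ i ∈ Finset.range L, x (i : ℤ) 1
    have key : ∀ i ∈ Finset.range L,
        f (x ((i : ℤ) - 1)) (x (i : ℤ)) (x ((i : ℤ) + 1)) 1
          = x (i : ℤ) 1 + ((fun j : ℤ => x j 2 * x (j + 1) 1) (i : ℤ)
            - (fun j : ℤ => x j 2 * x (j + 1) 1) ((i : ℤ) - 1)) := by
      intro i _
      rw [hf]
      have h := hsum ((i : ℤ) - 1)
      simp only [Matrix.cons_val_one, Matrix.head_cons, Matrix.cons_val_zero]
      have : (i : ℤ) - 1 + 1 = i := by ring
      rw [this]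
      linear_combination (x (i : ℤ) 1) * h
    rw [Finset.sum_congr rfl key, Finset.sum_add_distrib, Finset.sum_sub_distrib]
    have htel := shift_sum L hL (fun j : ℤ => x j 2 * x (j + 1) 1)
      (by intro j; simp [hper, add_right_comm j (L : ℤ) 1])
    linarith [htel]
  · -- k = 2
    show ∑ i ∈ Finset.range L, f (x ((i : ℤ) - 1)) (x (i : ℤ)) (x ((i : ℤ) + 1)) 2
      = ∑ i ∈ Finset.range L, x (i : ℤ) 2
    have key : ∀ i ∈ Finset.range L,
        f (x ((i : ℤ) - 1)) (x (i : ℤ)) (x ((i : ℤ) + 1)) 2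
          = ((fun j : ℤ => x j 2) ((i : ℤ) - 1))
            + ((fun j : ℤ => x j 2 * x (j + 1) 2) (i : ℤ)
            - (fun j : ℤ => x j 2 * x (j + 1) 2) ((i : ℤ) - 1)) := by
      intro i _
      rw [hf]
      have h := hsum (i : ℤ)
      simp only [Matrix.cons_val_two, Matrix.tail_cons, Matrix.head_cons]
      have : (i : ℤ) - 1 + 1 = i := by ring
      rw [this]
      linear_combination (x ((i : ℤ) - 1) 2) * h
    rw [Finset.sum_congr rfl key, Finset.sum_add_distrib, Finset.sum_sub_distrib]
    have htel := shift_sum L hL (fun j : ℤ => x j 2 * x (j + 1) 2)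
      (by intro j; simp [hper, add_right_comm j (L : ℤ) 1])
    have htel2 := shift_sum L hL (fun j : ℤ => x j 2) (by intro j; simp [hper])
    linarith [htel, htel2]
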